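/- Let X be a real Banach space, 0 < p < ∞, and ∑_i x_i a series in X. The following are equivalent: (1) ∑_i x_i is weakly unconditionally Cauchy; (2) S_{w-w_p}(∑ x_i) is complete; (3) c_0 ⊆ S_{w-w_p}(∑ x_i). -/

import Mathlib

open Filter Finset BoundedContinuousFunction

/-- Weak strong `p`-Cesàro (w-w_p) summability: strong `p`-Cesàro summability of
`(f (x k))` to `f L` for every continuous linear functional `f`. -/
def WeakStrongCesaro {X : Type*} [NormedAddCommGroup X] [NormedSpace ℝ X]
    (p : ℝ) (x : ℕ → X) (L : X) : Prop :=
  ∀ f : X →L[ℝ] ℝ,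
    Tendsto (fun n : ℕ => (n : ℝ)⁻¹ * ∑ k ∈ range n, |f (x k) - f L| ^ p) atTop (nhds 0)

/-- The `w-w_p`-summability space of a series, inside `ℓ∞ = (ℕ →ᵇ ℝ)`. -/
def SwwpSpace {X : Type*} [NormedAddCommGroup X] [NormedSpace ℝ X]
    (p : ℝ) (x : ℕ → X) : Set (ℕ →ᵇ ℝ) :=
  {a : ℕ →ᵇ ℝ | ∃ L : X, WeakStrongCesaro p (fun n => ∑ i ∈ range n, a i • x i) L}


lemma not_avg_tendsto_zero {v : ℕ → ℝ} (hv : ∀ k, 0 ≤ v k) {c : ℝ} (hc : 0 < c)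
    {N : ℕ} (hN : ∀ k ≥ N, c ≤ v k) :
    ¬ Tendsto (fun n : ℕ => (n : ℝ)⁻¹ * ∑ k ∈ range n, v k) atTop (nhds 0) := by
  intro h
  obtain ⟨M, hM⟩ := (Metric.tendsto_atTop.mp h) (c / 2) (by positivity)
  set n := max (2 * N + 2) (M + 1) with hn
  have hnM : M ≤ n := le_trans (Nat.le_succ M) (le_max_right _ _)
  have hn2 : 2 * N + 2 ≤ n := le_max_left _ _
  have hNn : N ≤ n := by omega
  have hn0 : (0 : ℝ) < n := by positivity
  have h1 : ∑ k ∈ Ico N n, v k ≤ ∑ k ∈ range n, v k := by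
    apply Finset.sum_le_sum_of_subset_of_nonneg
    · intro i hi; simp only [Finset.mem_Ico] at hi; exact Finset.mem_range.2 hi.2
    · intro i _ _; exact hv i
  have h2 : ((n - N : ℕ) : ℝ) * c ≤ ∑ k ∈ Ico N n, v k := by
    calc ((n - N : ℕ) : ℝ) * c = ∑ _k ∈ Ico N n, c := by
          rw [Finset.sum_const, Nat.card_Ico, nsmul_eq_mul]
      _ ≤ ∑ k ∈ Ico N n, v k := Finset.sum_le_sum fun i hi => hN i (Finset.mem_Ico.1 hi).1
  have hcast : ((n - N : ℕ) : ℝ) = (n : ℝ) - N := by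
    rw [Nat.cast_sub hNn]
  have hbound := hM n hnM
  rw [Real.dist_eq, sub_zero] at hbound
  have havg : c / 2 ≤ (n : ℝ)⁻¹ * ∑ k ∈ range n, v k := by
    have hnN : (N : ℝ) * 2 + 2 ≤ (n : ℝ) := by
      have := (Nat.cast_le (α := ℝ)).2 hn2; push_cast at this; linarith
    have h3 : ((n : ℝ) - N) * c ≤ ∑ k ∈ range n, v k := by
      rw [← hcast]; exact le_trans h2 h1
    have h4 : c / 2 * n ≤ ∑ k ∈ range n, v k := by nlinarith
    calc c / 2 = (n:ℝ)⁻¹ * (c / 2 * n) := by field_simp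
      _ ≤ (n:ℝ)⁻¹ * ∑ k ∈ range n, v k :=
          mul_le_mul_of_nonneg_left h4 (by positivity)
  have hnonneg : 0 ≤ (n : ℝ)⁻¹ * ∑ k ∈ range n, v k := by
    apply mul_nonneg (by positivity) (Finset.sum_nonneg fun i _ => hv i)
  rw [abs_of_nonneg hnonneg] at hbound
  linarith

lemma avg_tendsto_zero_of_eventually_zero {v : ℕ → ℝ} {N : ℕ} (hN : ∀ k ≥ N, v k = 0) :
    Tendsto (fun n : ℕ => (n : ℝ)⁻¹ * ∑ k ∈ range n, v k) atTop (nhds 0) := by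
  have key : ∀ n ≥ N, ∑ k ∈ range n, v k = ∑ k ∈ range N, v k := by
    intro n hn
    rw [← Finset.sum_subset (Finset.range_subset_range.2 hn)]
    intro i hi hni
    exact hN i (le_of_not_gt fun hc => hni (Finset.mem_range.2 hc))
  have : Tendsto (fun n : ℕ => (n : ℝ)⁻¹ * ∑ k ∈ range N, v k) atTop (nhds 0) := by
    have h0 : Tendsto (fun n : ℕ => (n : ℝ)⁻¹) atTop (nhds 0) :=
      tendsto_inv_atTop_nhds_zero_nat
    simpa using h0.mul_const (∑ k ∈ range N, v k)
  apply this.congr'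
  filter_upwards [eventually_ge_atTop N] with n hn
  rw [key n hn]

lemma rpow_add_le' {p : ℝ} (hp : 0 < p) {A B : ℝ} (hA : 0 ≤ A) (hB : 0 ≤ B) :
    (A + B) ^ p ≤ 2 ^ p * (A ^ p + B ^ p) := by
  have hmax : A + B ≤ 2 * max A B := by
    rcases le_total A B with h | h
    · rw [max_eq_right h]; linarith
    · rw [max_eq_left h]; linarith
  have hM0 : 0 ≤ max A B := le_max_of_le_left hA
  calc (A + B) ^ p ≤ (2 * max A B) ^ p :=
        Real.rpow_le_rpow (by positivity) hmax hp.le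
    _ = 2 ^ p * (max A B) ^ p := Real.mul_rpow (by norm_num) hM0
    _ ≤ 2 ^ p * (A ^ p + B ^ p) := by
        have h2p : (0:ℝ) ≤ 2 ^ p := Real.rpow_nonneg (by norm_num) p
        apply mul_le_mul_of_nonneg_left _ h2p
        rcases le_total A B with h | h
        · rw [max_eq_right h]
          have := Real.rpow_nonneg hA p; linarith
        · rw [max_eq_left h]
          have := Real.rpow_nonneg hB p; linarith

lemma wp_limit_close {p : ℝ} (hp : 0 < p) {t s : ℕ → ℝ} {c d ε : ℝ}
    (hts : ∀ n, |t n - s n| ≤ ε)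
    (ht : Tendsto (fun n : ℕ => (n : ℝ)⁻¹ * ∑ k ∈ range n, |t k - c| ^ p) atTop (nhds 0))
    (hs : Tendsto (fun n : ℕ => (n : ℝ)⁻¹ * ∑ k ∈ range n, |s k - d| ^ p) atTop (nhds 0)) :
    |c - d| ≤ ε := by
  by_contra hlt
  push_neg at hlt
  set δ := |c - d| - ε with hδdef
  have hδ0 : 0 < δ := by linarith
  have key : ∀ k, (δ / 2) ^ p ≤ |t k - c| ^ p + |s k - d| ^ p := by
    intro k
    have htri : |c - d| ≤ |t k - c| + |t k - s k| + |s k - d| := by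
      have : c - d = -(t k - c) + (t k - s k) + (s k - d) := by ring
      rw [this]
      calc |(-(t k - c) + (t k - s k)) + (s k - d)| ≤ |(-(t k - c) + (t k - s k))| + |s k - d| := abs_add_le _ _
        _ ≤ |(-(t k - c))| + |t k - s k| + |s k - d| := by
            have := abs_add_le (-(t k - c)) (t k - s k); linarith
        _ = |t k - c| + |t k - s k| + |s k - d| := by rw [abs_neg]
    have h1 : δ ≤ |t k - c| + |s k - d| := by
      have := hts k; linarith
    rcases le_total (|t k - c|) (|s k - d|) with h | h
    · have h2 : δ / 2 ≤ |s k - d| := by linarith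
      have := Real.rpow_le_rpow (by positivity) h2 hp.le
      have := Real.rpow_nonneg (abs_nonneg (t k - c)) p
      linarith
    · have h2 : δ / 2 ≤ |t k - c| := by linarith
      have := Real.rpow_le_rpow (by positivity) h2 hp.le
      have := Real.rpow_nonneg (abs_nonneg (s k - d)) p
      linarith
  have hsum : Tendsto (fun n : ℕ => (n : ℝ)⁻¹ *
      ∑ k ∈ range n, (|t k - c| ^ p + |s k - d| ^ p)) atTop (nhds 0) := by
    have := ht.add hs
    rw [add_zero] at this
    apply this.congr
    intro n
    rw [Finset.sum_add_distrib, mul_add]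
  exact not_avg_tendsto_zero
    (fun k => by positivity)
    (Real.rpow_pos_of_pos (by positivity) p)
    (N := 0) (fun k _ => key k) hsum
lemma wp_of_approx {p : ℝ} (hp : 0 < p) {t : ℕ → ℝ} {c : ℝ}
    (h : ∀ δ > (0:ℝ), ∃ s : ℕ → ℝ, ∃ d : ℝ,
      (∀ n, |t n - s n| ≤ δ) ∧ |c - d| ≤ δ ∧
      Tendsto (fun n : ℕ => (n : ℝ)⁻¹ * ∑ k ∈ range n, |s k - d| ^ p) atTop (nhds 0)) :
    Tendsto (fun n : ℕ => (n : ℝ)⁻¹ * ∑ k ∈ range n, |t k - c| ^ p) atTop (nhds 0) := by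
  rw [Metric.tendsto_atTop]
  intro ε hε
  set δ := (ε / 2) ^ p⁻¹ / 4 with hδdef
  have hδ0 : 0 < δ := by
    have := Real.rpow_pos_of_pos (show (0:ℝ) < ε / 2 by linarith) p⁻¹
    positivity
  obtain ⟨s, d, h1, h2, h3⟩ := h δ hδ0
  have h4δ : (2:ℝ) ^ p * (2 * δ) ^ p = ε / 2 := by
    rw [← Real.mul_rpow (by norm_num) (by positivity)]
    have : (2:ℝ) * (2 * δ) = (ε / 2) ^ p⁻¹ := by rw [hδdef]; ring
    rw [this, ← Real.rpow_mul (by positivity), inv_mul_cancel₀ (ne_of_gt hp), Real.rpow_one]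
  have h2p : (0:ℝ) < 2 ^ p := Real.rpow_pos_of_pos (by norm_num) p
  obtain ⟨M, hM⟩ := Metric.tendsto_atTop.mp h3 (ε / (2 ^ p * 4)) (by positivity)
  refine ⟨M, fun n hn => ?_⟩
  have hptwise : ∀ k, |t k - c| ^ p ≤ 2 ^ p * ((2 * δ) ^ p + |s k - d| ^ p) := by
    intro k
    have habs : |t k - c| ≤ 2 * δ + |s k - d| := by
      have : t k - c = (t k - s k) + (s k - d) + (d - c) := by ring
      rw [this]
      have e1 := abs_add_le ((t k - s k) + (s k - d)) (d - c)
      have e2 := abs_add_le (t k - s k) (s k - d)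
      have e3 := h1 k
      have e4 : |d - c| ≤ δ := by rw [abs_sub_comm]; exact h2
      linarith
    calc |t k - c| ^ p ≤ (2 * δ + |s k - d|) ^ p :=
          Real.rpow_le_rpow (abs_nonneg _) habs hp.le
      _ ≤ 2 ^ p * ((2 * δ) ^ p + |s k - d| ^ p) :=
          rpow_add_le' hp (by positivity) (abs_nonneg _)
  have havg_s := hM n hn
  rw [Real.dist_eq, sub_zero] at havg_s
  have hσnn : (0:ℝ) ≤ (n : ℝ)⁻¹ * ∑ k ∈ range n, |s k - d| ^ p := by
    apply mul_nonneg (by positivity)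
    exact Finset.sum_nonneg fun k _ => Real.rpow_nonneg (abs_nonneg _) p
  rw [abs_of_nonneg hσnn] at havg_s
  rw [Real.dist_eq, sub_zero]
  have htnn : (0:ℝ) ≤ (n : ℝ)⁻¹ * ∑ k ∈ range n, |t k - c| ^ p := by
    apply mul_nonneg (by positivity)
    exact Finset.sum_nonneg fun k _ => Real.rpow_nonneg (abs_nonneg _) p
  rw [abs_of_nonneg htnn]
  rcases Nat.eq_zero_or_pos n with hn0 | hn0
  · subst hn0; simpa using hε
  have hn0' : (0:ℝ) < n := by exact_mod_cast hn0
  have hsum : ∑ k ∈ range n, |t k - c| ^ p ≤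
      n * (2 ^ p * (2 * δ) ^ p) + 2 ^ p * ∑ k ∈ range n, |s k - d| ^ p := by
    calc ∑ k ∈ range n, |t k - c| ^ p
        ≤ ∑ k ∈ range n, 2 ^ p * ((2 * δ) ^ p + |s k - d| ^ p) :=
          Finset.sum_le_sum fun k _ => hptwise k
      _ = n * (2 ^ p * (2 * δ) ^ p) + 2 ^ p * ∑ k ∈ range n, |s k - d| ^ p := by
          rw [Finset.mul_sum, Finset.sum_congr rfl (fun k _ => mul_add (2^p) ((2*δ)^p) (|s k - d|^p)),
            Finset.sum_add_distrib, Finset.sum_const, Finset.card_range, nsmul_eq_mul]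
  calc (n : ℝ)⁻¹ * ∑ k ∈ range n, |t k - c| ^ p
      ≤ (n : ℝ)⁻¹ * (n * (2 ^ p * (2 * δ) ^ p) + 2 ^ p * ∑ k ∈ range n, |s k - d| ^ p) :=
        mul_le_mul_of_nonneg_left hsum (by positivity)
    _ = ε / 2 + 2 ^ p * ((n : ℝ)⁻¹ * ∑ k ∈ range n, |s k - d| ^ p) := by
        rw [h4δ]; field_simp
    _ < ε / 2 + 2 ^ p * (ε / (2 ^ p * 4)) := by
        have := mul_lt_mul_of_pos_left havg_s h2p
        linarith
    _ ≤ ε := by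
        have : 2 ^ p * (ε / (2 ^ p * 4)) = ε / 4 := by field_simp
        rw [this]; linarith
lemma wuc_bound {X : Type*} [NormedAddCommGroup X] [NormedSpace ℝ X] (x : ℕ → X)
    (h : ∀ f : X →L[ℝ] ℝ, Summable fun i => |f (x i)|) :
    ∃ H : ℝ, 0 ≤ H ∧ ∀ (f : X →L[ℝ] ℝ) (F : Finset ℕ), ∑ i ∈ F, |f (x i)| ≤ H * ‖f‖ := by
  classical
  set g : (Finset ℕ × {ε : ℕ → ℝ // ∀ i, |ε i| ≤ 1}) → (X →L[ℝ] ℝ) →L[ℝ] ℝ := fun q =>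
    NormedSpace.inclusionInDoubleDual ℝ X (∑ i ∈ q.1, q.2.1 i • x i) with hg
  have happly : ∀ q (f : X →L[ℝ] ℝ), g q f = ∑ i ∈ q.1, q.2.1 i * f (x i) := by
    intro q f
    rw [hg]
    dsimp only
    rw [NormedSpace.dual_def, map_sum]
    exact Finset.sum_congr rfl fun i _ => by rw [map_smul, smul_eq_mul]
  have hpt : ∀ f : X →L[ℝ] ℝ, ∃ C, ∀ q, ‖g q f‖ ≤ C := by
    intro f
    refine ⟨∑' i, |f (x i)|, fun q => ?_⟩
    rw [happly, Real.norm_eq_abs]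
    calc |∑ i ∈ q.1, q.2.1 i * f (x i)| ≤ ∑ i ∈ q.1, |q.2.1 i * f (x i)| :=
          Finset.abs_sum_le_sum_abs _ _
      _ ≤ ∑ i ∈ q.1, |f (x i)| := by
          apply Finset.sum_le_sum
          intro i _
          rw [abs_mul]
          exact mul_le_of_le_one_left (abs_nonneg _) (q.2.2 i)
      _ ≤ ∑' i, |f (x i)| := Summable.sum_le_tsum _ (fun i _ => abs_nonneg _) (h f)
  obtain ⟨H, hH⟩ := banach_steinhaus hpt
  refine ⟨max H 0, le_max_right _ _, fun f F => ?_⟩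
  set ε : ℕ → ℝ := fun i => if f (x i) < 0 then -1 else 1 with hε
  have hε1 : ∀ i, |ε i| ≤ 1 := by
    intro i; rw [hε]; dsimp only; split <;> norm_num
  set q : Finset ℕ × {ε : ℕ → ℝ // ∀ i, |ε i| ≤ 1} := (F, ⟨ε, hε1⟩) with hq
  have hval : g q f = ∑ i ∈ F, |f (x i)| := by
    rw [happly]
    apply Finset.sum_congr rfl
    intro i _
    show ε i * f (x i) = |f (x i)|
    rw [hε]; dsimp only; split
    · rw [abs_of_neg (by assumption)]; ring
    · rw [abs_of_nonneg (by linarith [not_lt.1 (by assumption)])]; ring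
  calc ∑ i ∈ F, |f (x i)| = g q f := hval.symm
    _ ≤ |g q f| := le_abs_self _
    _ ≤ ‖g q‖ * ‖f‖ := (g q).le_opNorm f
    _ ≤ max H 0 * ‖f‖ := by
        apply mul_le_mul_of_nonneg_right _ (norm_nonneg f)
        exact le_trans (hH q) (le_max_left _ _)
lemma one_imp_two {X : Type*} [NormedAddCommGroup X] [NormedSpace ℝ X] [CompleteSpace X]
    {p : ℝ} (hp : 0 < p) (x : ℕ → X)
    (h1 : ∀ f : X →L[ℝ] ℝ, Summable fun i => |f (x i)|) :
    IsComplete (SwwpSpace p x) := by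
  obtain ⟨H, hH0, hH⟩ := wuc_bound x h1
  have hdiff : ∀ (u v : ℕ →ᵇ ℝ) (f : X →L[ℝ] ℝ) (n : ℕ),
      |f (∑ i ∈ range n, u i • x i) - f (∑ i ∈ range n, v i • x i)| ≤ ‖u - v‖ * (H * ‖f‖) := by
    intro u v f n
    have e1 : f (∑ i ∈ range n, u i • x i) - f (∑ i ∈ range n, v i • x i)
        = ∑ i ∈ range n, (u i - v i) * f (x i) := by
      rw [← map_sub, ← Finset.sum_sub_distrib, map_sum]
      apply Finset.sum_congr rfl
      intro i _
      rw [← sub_smul, map_smul, smul_eq_mul]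
    rw [e1]
    calc |∑ i ∈ range n, (u i - v i) * f (x i)|
        ≤ ∑ i ∈ range n, |(u i - v i) * f (x i)| := Finset.abs_sum_le_sum_abs _ _
      _ ≤ ∑ i ∈ range n, ‖u - v‖ * |f (x i)| := by
          apply Finset.sum_le_sum
          intro i _
          rw [abs_mul]
          apply mul_le_mul_of_nonneg_right _ (abs_nonneg _)
          have := BoundedContinuousFunction.norm_coe_le_norm (u - v) i
          simpa [Real.norm_eq_abs] using this
      _ = ‖u - v‖ * ∑ i ∈ range n, |f (x i)| := by rw [Finset.mul_sum]
      _ ≤ ‖u - v‖ * (H * ‖f‖) :=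
          mul_le_mul_of_nonneg_left (hH f (range n)) (norm_nonneg _)
  apply IsClosed.isComplete
  apply IsSeqClosed.isClosed
  intro b a hb hba
  choose L hL using hb
  have hLL' : ∀ m m', ‖L m - L m'‖ ≤ H * ‖b m - b m'‖ := by
    intro m m'
    apply NormedSpace.norm_le_dual_bound ℝ _ (by positivity)
    intro f
    rw [map_sub, Real.norm_eq_abs]
    have key := wp_limit_close hp (fun n => hdiff (b m) (b m') f n) (hL m f) (hL m' f)
    calc |f (L m) - f (L m')| ≤ ‖b m - b m'‖ * (H * ‖f‖) := key
      _ = H * ‖b m - b m'‖ * ‖f‖ := by ring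
  have hbC : CauchySeq b := hba.cauchySeq
  have hLC : CauchySeq L := by
    rw [Metric.cauchySeq_iff]
    intro ε hε
    obtain ⟨N, hN⟩ := Metric.cauchySeq_iff.1 hbC (ε / (H + 1)) (by positivity)
    refine ⟨N, fun m hm m' hm' => ?_⟩
    rw [dist_eq_norm]
    have hd : ‖b m - b m'‖ < ε / (H + 1) := by
      rw [← dist_eq_norm]; exact hN m hm m' hm'
    calc ‖L m - L m'‖ ≤ H * ‖b m - b m'‖ := hLL' m m'
      _ ≤ H * (ε / (H + 1)) := mul_le_mul_of_nonneg_left (le_of_lt hd) hH0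
      _ < ε := by
          rw [mul_div_assoc', div_lt_iff₀ (by positivity)]
          nlinarith
  obtain ⟨Lim, hLim⟩ := cauchySeq_tendsto_of_complete hLC
  refine ⟨Lim, ?_⟩
  intro f
  apply wp_of_approx hp
  intro δ hδ
  have e1 : ∀ᶠ m in atTop, ‖a - b m‖ * (H * ‖f‖) < δ := by
    have ht : Tendsto (fun m => ‖a - b m‖ * (H * ‖f‖)) atTop (nhds 0) := by
      have h0 : Tendsto (fun m => ‖a - b m‖) atTop (nhds 0) := by
        have := tendsto_iff_dist_tendsto_zero.mp hba
        apply this.congr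
        intro m
        rw [dist_eq_norm, norm_sub_rev]
      simpa using h0.mul_const (H * ‖f‖)
    exact ht.eventually_lt_const hδ
  have e2 : ∀ᶠ m in atTop, |f Lim - f (L m)| < δ := by
    have ht : Tendsto (fun m => |f Lim - f (L m)|) atTop (nhds 0) := by
      have h0 : Tendsto (fun m => f (L m)) atTop (nhds (f Lim)) :=
        (f.continuous.tendsto Lim).comp hLim
      have := tendsto_iff_dist_tendsto_zero.mp h0
      apply this.congr
      intro m
      rw [Real.dist_eq, abs_sub_comm]
    exact ht.eventually_lt_const hδ
  obtain ⟨m, h1m, h2m⟩ := (e1.and e2).exists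
  refine ⟨fun n => f (∑ i ∈ range n, b m i • x i), f (L m), fun n => ?_, le_of_lt h2m, hL m f⟩
  exact le_of_lt (lt_of_le_of_lt (hdiff a (b m) f n) h1m)
lemma two_imp_three {X : Type*} [NormedAddCommGroup X] [NormedSpace ℝ X]
    {p : ℝ} (hp : 0 < p) (x : ℕ → X) (h2 : IsComplete (SwwpSpace p x)) :
    ∀ a : ℕ → ℝ, Tendsto a atTop (nhds 0) →
      ∃ L : X, WeakStrongCesaro p (fun n => ∑ i ∈ range n, a i • x i) L := by
  intro a ha
  -- a is bounded
  obtain ⟨N₀, hN₀⟩ := (Metric.tendsto_atTop.mp ha) 1 one_pos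
  set C : ℝ := 1 + ∑ i ∈ range N₀, |a i| with hC
  have hbdd : ∀ i, ‖a i‖ ≤ C := by
    intro i
    rw [Real.norm_eq_abs]
    rcases lt_or_ge i N₀ with h | h
    · have : |a i| ≤ ∑ j ∈ range N₀, |a j| :=
        Finset.single_le_sum (fun j _ => abs_nonneg (a j)) (Finset.mem_range.2 h)
      linarith
    · have := hN₀ i h
      rw [Real.dist_eq, sub_zero] at this
      have hnn : 0 ≤ ∑ j ∈ range N₀, |a j| := Finset.sum_nonneg fun j _ => abs_nonneg _
      linarith
  set aB : ℕ →ᵇ ℝ := BoundedContinuousFunction.ofNormedAddCommGroupDiscrete a C hbdd with haB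
  have hclosed : IsClosed (SwwpSpace p x) := h2.isClosed
  -- truncations belong to SwwpSpace
  have htrunc : ∀ N : ℕ, ∃ b : ℕ →ᵇ ℝ, b ∈ SwwpSpace p x ∧
      ∀ i, b i = if i < N then a i else 0 := by
    intro N
    have hb : ∀ i, ‖if i < N then a i else 0‖ ≤ C := by
      intro i
      split
      · exact hbdd i
      · simp only [norm_zero]
        have hnn : 0 ≤ ∑ j ∈ range N₀, |a j| := Finset.sum_nonneg fun j _ => abs_nonneg _
        rw [hC]; linarith
    refine ⟨BoundedContinuousFunction.ofNormedAddCommGroupDiscrete _ C hb, ?_, fun i => rfl⟩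
    refine ⟨∑ i ∈ range N, a i • x i, ?_⟩
    intro f
    apply avg_tendsto_zero_of_eventually_zero (N := N)
    intro k hk
    have hS : ∑ i ∈ range k, (if i < N then a i else 0) • x i = ∑ i ∈ range N, a i • x i := by
      rw [← Finset.sum_subset (Finset.range_subset_range.2 hk)]
      · apply Finset.sum_congr rfl
        intro i hi
        rw [if_pos (Finset.mem_range.1 hi)]
      · intro i _ hni
        rw [if_neg (fun hc => hni (Finset.mem_range.2 hc)), zero_smul]
    simp only [BoundedContinuousFunction.coe_ofNormedAddCommGroupDiscrete]
    rw [hS, sub_self, abs_zero, Real.zero_rpow (ne_of_gt hp)]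
  -- aB is in the closure
  have hmem : aB ∈ SwwpSpace p x := by
    rw [← hclosed.closure_eq]
    rw [Metric.mem_closure_iff]
    intro ε hε
    obtain ⟨N, hN⟩ := (Metric.tendsto_atTop.mp ha) (ε / 2) (by positivity)
    obtain ⟨b, hbS, hbi⟩ := htrunc N
    refine ⟨b, hbS, ?_⟩
    rw [dist_eq_norm]
    have : ‖aB - b‖ ≤ ε / 2 := by
      refine (BoundedContinuousFunction.norm_le (by positivity)).2 fun i => ?_
      simp only [BoundedContinuousFunction.coe_sub, Pi.sub_apply, hbi i]
      have haBi : aB i = a i := rfl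
      rw [haBi]
      split
      · simp
        positivity
      · rename_i hi
        rw [sub_zero, Real.norm_eq_abs]
        have := hN i (le_of_not_gt hi)
        rw [Real.dist_eq, sub_zero] at this
        linarith
    linarith
  obtain ⟨L, hL⟩ := hmem
  exact ⟨L, hL⟩
lemma three_imp_one {X : Type*} [NormedAddCommGroup X] [NormedSpace ℝ X]
    {p : ℝ} (hp : 0 < p) (x : ℕ → X)
    (h3 : ∀ a : ℕ → ℝ, Tendsto a atTop (nhds 0) →
      ∃ L : X, WeakStrongCesaro p (fun n => ∑ i ∈ range n, a i • x i) L) :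
    ∀ f : X →L[ℝ] ℝ, Summable fun i => |f (x i)| := by
  intro f
  by_contra hsum
  have hnn : ∀ i, 0 ≤ |f (x i)| := fun i => abs_nonneg _
  have hT : Tendsto (fun n => ∑ i ∈ range n, |f (x i)|) atTop atTop :=
    (not_summable_iff_tendsto_nat_atTop_of_nonneg hnn).1 hsum
  -- block construction
  have hstep : ∀ (m : ℕ) (c : ℝ), ∃ M, m < M ∧ c ≤ ∑ i ∈ Ico m M, |f (x i)| := by
    intro m c
    obtain ⟨M0, hM0⟩ := eventually_atTop.1 ((tendsto_atTop.mp hT) (c + ∑ i ∈ range m, |f (x i)|))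
    refine ⟨max (m + 1) M0, by omega, ?_⟩
    have hmM : m ≤ max (m + 1) M0 := by omega
    have := hM0 (max (m + 1) M0) (le_max_right _ _)
    rw [Finset.sum_Ico_eq_sub _ hmM]
    linarith
  choose g hg1 hg2 using hstep
  set N : ℕ → ℕ := fun k => Nat.rec 0 (fun k Nk => g Nk (k + 1)) k with hN
  have hN0 : N 0 = 0 := rfl
  have hNsucc : ∀ k, N (k + 1) = g (N k) (k + 1) := fun k => rfl
  have hNmono : StrictMono N := by
    apply strictMono_nat_of_lt_succ
    intro k
    rw [hNsucc]
    exact hg1 (N k) (k + 1)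
  have hNblock : ∀ k : ℕ, ((k : ℝ) + 1) ≤ ∑ i ∈ Ico (N k) (N (k + 1)), |f (x i)| := by
    intro k
    rw [hNsucc]
    exact_mod_cast hg2 (N k) (k + 1)
  have hNle : ∀ k, k ≤ N k := fun k => hNmono.le_apply
  have hex : ∀ i : ℕ, ∃ k, i < N (k + 1) := fun i =>
    ⟨i, lt_of_lt_of_le (Nat.lt_succ_self i) (hNle (i + 1))⟩
  set K : ℕ → ℕ := fun i => Nat.find (hex i) with hK
  have hKspec : ∀ i, i < N (K i + 1) := fun i => Nat.find_spec (hex i)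
  have hKle : ∀ i k, i < N (k + 1) → K i ≤ k := fun i k h => Nat.find_min' (hex i) h
  have hKge : ∀ i k, N k ≤ i → k ≤ K i := by
    intro i k h
    by_contra hc
    push_neg at hc
    have h1 : N (K i + 1) ≤ N k := hNmono.monotone (Nat.succ_le_of_lt hc)
    have h2 := hKspec i
    omega
  set s : ℕ → ℝ := fun i => if f (x i) < 0 then -1 else 1 with hs
  set a : ℕ → ℝ := fun i => s i * ((K i : ℝ) + 1)⁻¹ with ha
  have hsf : ∀ i, s i * f (x i) = |f (x i)| := by
    intro i
    rw [hs]
    dsimp only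
    split
    · rw [abs_of_neg (by assumption)]; ring
    · rw [abs_of_nonneg (not_lt.1 (by assumption))]; ring
  have hterm : ∀ i, a i * f (x i) = |f (x i)| * ((K i : ℝ) + 1)⁻¹ := by
    intro i
    rw [ha]
    dsimp only
    rw [mul_comm (s i), mul_assoc, hsf i, mul_comm]
  have htermnn : ∀ i, 0 ≤ a i * f (x i) := by
    intro i
    rw [hterm i]
    positivity
  -- a tends to 0
  have ha0 : Tendsto a atTop (nhds 0) := by
    rw [Metric.tendsto_atTop]
    intro ε hε
    obtain ⟨k, hk⟩ := exists_nat_one_div_lt hε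
    refine ⟨N k, fun i hi => ?_⟩
    rw [Real.dist_eq, sub_zero, ha]
    dsimp only
    rw [abs_mul]
    have hs1 : |s i| = 1 := by rw [hs]; dsimp only; split <;> norm_num
    rw [hs1, one_mul]
    have hki : (k : ℝ) ≤ K i := by exact_mod_cast hKge i k hi
    have h1 : |((K i : ℝ) + 1)⁻¹| = ((K i : ℝ) + 1)⁻¹ := abs_of_pos (by positivity)
    rw [h1]
    calc ((K i : ℝ) + 1)⁻¹ ≤ ((k : ℝ) + 1)⁻¹ := by
          apply inv_anti₀ (by positivity) (by linarith)
      _ < ε := by rw [← one_div]; exact hk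
  obtain ⟨L, hL⟩ := h3 a ha0
  -- the scalar partial sums
  set t : ℕ → ℝ := fun n => ∑ i ∈ range n, a i * f (x i) with htdef
  have hft : ∀ n, f (∑ i ∈ range n, a i • x i) = t n := by
    intro n
    rw [htdef, map_sum]
    exact Finset.sum_congr rfl fun i _ => by rw [map_smul, smul_eq_mul]
  have htmono : Monotone t := by
    intro m n hmn
    apply Finset.sum_le_sum_of_subset_of_nonneg (Finset.range_subset_range.2 hmn)
    intro i _ _
    exact htermnn i
  have htN : ∀ k : ℕ, (k : ℝ) ≤ t (N k) := by
    intro k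
    induction k with
    | zero => rw [hN0]; simp [htdef]
    | succ k ih =>
      have hblock : (1 : ℝ) ≤ ∑ i ∈ Ico (N k) (N (k + 1)), a i * f (x i) := by
        have hsub : ∀ i ∈ Ico (N k) (N (k + 1)),
            |f (x i)| * ((k : ℝ) + 1)⁻¹ ≤ a i * f (x i) := by
          intro i hi
          rw [hterm i]
          apply mul_le_mul_of_nonneg_left _ (abs_nonneg _)
          have hik : K i ≤ k := hKle i k (Finset.mem_Ico.1 hi).2
          apply inv_anti₀ (by positivity)
          have : (K i : ℝ) ≤ k := by exact_mod_cast hik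
          linarith
        calc (1 : ℝ) = ((k : ℝ) + 1) * ((k : ℝ) + 1)⁻¹ := by
              rw [mul_inv_cancel₀ (by positivity)]
          _ ≤ (∑ i ∈ Ico (N k) (N (k + 1)), |f (x i)|) * ((k : ℝ) + 1)⁻¹ := by
              apply mul_le_mul_of_nonneg_right (hNblock k) (by positivity)
          _ = ∑ i ∈ Ico (N k) (N (k + 1)), |f (x i)| * ((k : ℝ) + 1)⁻¹ := by
              rw [Finset.sum_mul]
          _ ≤ ∑ i ∈ Ico (N k) (N (k + 1)), a i * f (x i) := Finset.sum_le_sum hsub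
      have hsplit : t (N (k + 1)) = t (N k) + ∑ i ∈ Ico (N k) (N (k + 1)), a i * f (x i) := by
        rw [htdef]
        dsimp only
        rw [← Finset.sum_range_add_sum_Ico _ (le_of_lt (hNmono (Nat.lt_succ_self k)))]
      rw [hsplit]
      push_cast
      linarith
  have httop : Tendsto t atTop atTop := by
    rw [tendsto_atTop]
    intro b
    filter_upwards [eventually_ge_atTop (N ⌈b⌉₊)] with n hn
    calc b ≤ (⌈b⌉₊ : ℝ) := Nat.le_ceil b
      _ ≤ t (N ⌈b⌉₊) := htN _
      _ ≤ t n := htmono hn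
  -- contradiction with WeakStrongCesaro
  have hw := hL f
  have hw' : Tendsto (fun n : ℕ => (n : ℝ)⁻¹ * ∑ k ∈ range n, |t k - f L| ^ p)
      atTop (nhds 0) := by
    apply hw.congr
    intro n
    congr 1
    exact Finset.sum_congr rfl fun k _ => by rw [hft k]
  obtain ⟨N₁, hN₁⟩ := (eventually_atTop.1 ((tendsto_atTop.mp httop) (f L + 1)))
  refine not_avg_tendsto_zero (v := fun k => |t k - f L| ^ p)
    (fun k => Real.rpow_nonneg (abs_nonneg _) p) one_pos (N := N₁) ?_ hw'
  intro k hk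
  have h1 : 1 ≤ |t k - f L| := by
    have := hN₁ k hk
    rw [abs_of_nonneg (by linarith)]
    linarith
  calc (1 : ℝ) = 1 ^ p := (Real.one_rpow p).symm
    _ ≤ |t k - f L| ^ p := Real.rpow_le_rpow (by norm_num) h1 hp.le

theorem statement15 {X : Type*} [NormedAddCommGroup X] [NormedSpace ℝ X] [CompleteSpace X]
    (p : ℝ) (hp : 0 < p) (x : ℕ → X) :
    List.TFAE
      [∀ f : X →L[ℝ] ℝ, Summable fun i => |f (x i)|,
       IsComplete (SwwpSpace p x),
       ∀ a : ℕ → ℝ, Tendsto a atTop (nhds 0) →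
         ∃ L : X, WeakStrongCesaro p (fun n => ∑ i ∈ range n, a i • x i) L] := by
  tfae_have 1 → 2 := fun h1 => one_imp_two hp x h1
  tfae_have 2 → 3 := fun h2 => two_imp_three hp x h2
  tfae_have 3 → 1 := fun h3 => three_imp_one hp x h3
  tfae_finish
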